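/- arXiv:1710.09002 — 3 statements merged into one kernel-verified Lean document; each statement's English description precedes it below -/
import Mathlib

section
/- Suppose 0 < α ≤ (ε/4)/log(mn‖A‖_∞/ε), 0 < ε ≤ 1/4, m,n ≥ 1, ‖A‖_∞ ≥ 1, and mn‖A‖_∞/ε > 1. If a real number v satisfies 0 ≤ v ≤ 1 − ε/2, then v^{1/α} ≤ ε/(m n ‖A‖_∞); consequently, if Ax ≤ (1−ε/2)·1 componentwise with Ax ≥ 0, then (α/(1+α)) Σ_{i=1}^m (Ax)_i^{(1+α)/α} ≤ (ε/4)·(1/‖A‖_∞). -/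
/-- approximate barrier property strictly inside the packing polytope. -/
theorem approximate_barrier_inside (m n : ℕ) (hm : 1 ≤ m) (hn : 1 ≤ n)
    (ε α M : ℝ) (hε : 0 < ε) (hε4 : ε ≤ 1 / 4) (hM : 1 ≤ M)
    (hR : 1 < (m : ℝ) * n * M / ε)
    (hα : 0 < α) (hαle : α ≤ (ε / 4) / Real.log ((m : ℝ) * n * M / ε))
    (A : Matrix (Fin m) (Fin n) ℝ) (hA0 : ∀ i j, 0 ≤ A i j)
    (x : Fin n → ℝ)
    (hAx0 : ∀ i, 0 ≤ A.mulVec x i)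
    (hAx : ∀ i, A.mulVec x i ≤ 1 - ε / 2) :
    (∀ v : ℝ, 0 ≤ v → v ≤ 1 - ε / 2 → v ^ (1 / α) ≤ ε / ((m : ℝ) * n * M)) ∧
    (α / (1 + α)) * (∑ i, (A.mulVec x i) ^ ((1 + α) / α)) ≤ (ε / 4) * (1 / M) := by
  have hm1 : (1:ℝ) ≤ (m:ℝ) := by exact_mod_cast hm
  have hn1 : (1:ℝ) ≤ (n:ℝ) := by exact_mod_cast hn
  set R : ℝ := (m : ℝ) * n * M / ε with hRdef
  have hmn' : (1:ℝ) ≤ (m:ℝ) * n := by nlinarith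
  have hmn : (1:ℝ) ≤ (m:ℝ) * n * M := by nlinarith
  have hR4 : (4:ℝ) ≤ R := by
    rw [hRdef, le_div_iff₀ hε]; nlinarith
  have hRpos : (0:ℝ) < R := by linarith
  have hlogR1 : (1:ℝ) ≤ Real.log R := by
    rw [Real.le_log_iff_exp_le hRpos]
    have := Real.exp_one_lt_d9
    linarith
  have hlogRpos : (0:ℝ) < Real.log R := by linarith
  have hαε : α * Real.log R ≤ ε / 4 := (le_div_iff₀ hlogRpos).mp hαle
  have hα4 : α ≤ ε / 4 := le_trans hαle (div_le_self (by positivity) hlogR1)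
  have key : ∀ v : ℝ, 0 ≤ v → v ≤ 1 - ε/2 → v ^ (1/α) ≤ ε / ((m:ℝ)*n*M) := by
    intro v hv0 hv1
    have hb : (0:ℝ) < 1 - ε/2 := by linarith
    have hstep : (1 - ε/2) ^ (1/α) ≤ ε / ((m:ℝ)*n*M) := by
      have hL : Real.log (1 - ε/2) ≤ -(ε/2) := by
        have := Real.log_le_sub_one_of_pos hb
        linarith
      have hexp : (1/α) * Real.log (1 - ε/2) ≤ -Real.log R := by
        rw [div_mul_eq_mul_div, one_mul, div_le_iff₀ hα]
        nlinarith
      calc (1 - ε/2) ^ (1/α) = Real.exp ((1/α) * Real.log (1 - ε/2)) := by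
            rw [Real.rpow_def_of_pos hb, mul_comm]
        _ ≤ Real.exp (-Real.log R) := Real.exp_le_exp.mpr hexp
        _ = ε / ((m:ℝ)*n*M) := by
            rw [Real.exp_neg, Real.exp_log hRpos, hRdef, inv_div]
    calc v ^ (1/α) ≤ (1 - ε/2) ^ (1/α) :=
          Real.rpow_le_rpow hv0 hv1 (by positivity)
      _ ≤ _ := hstep
  refine ⟨key, ?_⟩
  have hterm : ∀ i, (A.mulVec x i) ^ ((1+α)/α) ≤ ε / ((m:ℝ)*n*M) := by
    intro i
    rcases eq_or_lt_of_le (hAx0 i) with h0 | h0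
    · rw [← h0, Real.zero_rpow (by positivity)]
      positivity
    · have h1 : A.mulVec x i ≤ 1 := by have := hAx i; linarith
      have h2 : (A.mulVec x i) ^ ((1+α)/α) ≤ (A.mulVec x i) ^ (1/α) :=
        Real.rpow_le_rpow_of_exponent_ge h0 h1 (by
          rw [div_le_div_iff₀ hα hα]; nlinarith)
      exact h2.trans (key _ (hAx0 i) (hAx i))
  have hsum : ∑ i, (A.mulVec x i) ^ ((1+α)/α) ≤ (m:ℝ) * (ε / ((m:ℝ)*n*M)) := by
    calc ∑ i, (A.mulVec x i) ^ ((1+α)/α) ≤ ∑ _i : Fin m, ε / ((m:ℝ)*n*M) :=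
          Finset.sum_le_sum (fun i _ => hterm i)
      _ = (m:ℝ) * (ε / ((m:ℝ)*n*M)) := by
          simp [Finset.sum_const, mul_comm]
  have heq : (m:ℝ) * (ε / ((m:ℝ)*n*M)) = ε / ((n:ℝ)*M) := by
    field_simp
  have h2 : ε / ((n:ℝ)*M) ≤ 1 / M := by
    rw [div_le_div_iff₀ (by nlinarith) (by linarith)]
    nlinarith
  have hS0 : 0 ≤ ∑ i, (A.mulVec x i) ^ ((1+α)/α) :=
    Finset.sum_nonneg (fun i _ => Real.rpow_nonneg (hAx0 i) _)
  have hfac : α/(1+α) ≤ ε/4 :=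
    le_trans (div_le_self (le_of_lt hα) (by linarith)) hα4
  have hSle : ∑ i, (A.mulVec x i) ^ ((1+α)/α) ≤ 1 / M := by
    calc ∑ i, (A.mulVec x i) ^ ((1+α)/α) ≤ (m:ℝ) * (ε / ((m:ℝ)*n*M)) := hsum
      _ = ε / ((n:ℝ)*M) := heq
      _ ≤ 1 / M := h2
  exact mul_le_mul hfac hSle hS0 (by positivity)
end

section
/- Suppose 0 < α ≤ (ε/4)/log(mn‖A‖_∞/ε) with 0 < ε ≤ 1/4 and mn‖A‖_∞/ε ≥ e. If a real number v satisfies v ≥ 1 + ε/2, then v^{1/α} ≥ (mn‖A‖_∞/ε)^{7/4}. -/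
/-- blow-up of the barrier outside the packing polytope:
if `v ≥ 1 + ε/2` then `v^{1/α} ≥ (mn‖A‖_∞/ε)^{7/4}`. -/
theorem approximate_barrier_outside (m n : ℕ) (ε α M : ℝ)
    (hε : 0 < ε) (hε4 : ε ≤ 1 / 4)
    (hR : Real.exp 1 ≤ (m : ℝ) * n * M / ε)
    (hα : 0 < α) (hαle : α ≤ (ε / 4) / Real.log ((m : ℝ) * n * M / ε))
    (v : ℝ) (hv : 1 + ε / 2 ≤ v) :
    ((m : ℝ) * n * M / ε) ^ ((7 : ℝ) / 4) ≤ v ^ (1 / α) := by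
  set R : ℝ := (m : ℝ) * n * M / ε with hRdef
  have hRpos : 0 < R := lt_of_lt_of_le (Real.exp_pos 1) hR
  have hL1 : 1 ≤ Real.log R := by
    have := Real.log_le_log (Real.exp_pos 1) hR
    simpa using this
  have hLpos : 0 < Real.log R := lt_of_lt_of_le one_pos hL1
  have hvpos : 0 < v := lt_of_lt_of_le (by linarith) hv
  -- log v ≥ (ε/2)/(1+ε/2) ≥ 7ε/16
  have hlogv : (7 : ℝ) / 16 * ε ≤ Real.log v := by
    have h1 : Real.log (1 / (1 + ε / 2)) ≤ 1 / (1 + ε / 2) - 1 :=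
      Real.log_le_sub_one_of_pos (by positivity)
    rw [Real.log_div one_ne_zero (by positivity), Real.log_one] at h1
    have h2 : (ε / 2) / (1 + ε / 2) ≤ Real.log (1 + ε / 2) := by
      have hpos : (0:ℝ) < 1 + ε / 2 := by linarith
      have : 1 / (1 + ε / 2) - 1 = -((ε / 2) / (1 + ε / 2)) := by
        field_simp; ring
      linarith [h1, this ▸ h1]
    have h3 : (7 : ℝ) / 16 * ε ≤ (ε / 2) / (1 + ε / 2) := by
      rw [le_div_iff₀ (by linarith)]
      nlinarith
    have h4 : Real.log (1 + ε / 2) ≤ Real.log v :=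
      Real.log_le_log (by linarith) hv
    linarith
  -- 1/α ≥ 4 log R / ε
  have hαle' : α ≤ ε / 4 / Real.log R := hαle
  have hinv : 4 * Real.log R / ε ≤ 1 / α := by
    rw [div_le_div_iff₀ (by positivity) hα]
    have := (le_div_iff₀ hLpos).mp hαle'
    nlinarith
  -- key: (7/4) log R ≤ (1/α) * log v
  have hkey : 7 / 4 * Real.log R ≤ (1 / α) * Real.log v := by
    have h0 : 7 / 4 * Real.log R = (4 * Real.log R / ε) * (7 / 16 * ε) := by
      field_simp; ring
    rw [h0]
    have hl : 0 ≤ Real.log v := le_trans (by positivity) hlogv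
    exact mul_le_mul hinv hlogv (by positivity) (by positivity)
  rw [Real.rpow_def_of_pos hRpos, Real.rpow_def_of_pos hvpos]
  exact Real.exp_le_exp.mpr (by linarith)
end

section
/- (Local multiplicative smoothness.) Let f_α(x) = −⟨1,x⟩ + (α/(1+α)) Σ_i (Ax)_i^{(1+α)/α} with A ≥ 0, 0 < α < 1, and let x ≥ 0 with Ax > 0. Let T_j denote the truncated gradient: T_j = ∇_j f_α(x) if ∇_j f_α(x) ∈ [−1,1] and T_j = 1 if ∇_j f_α(x) > 1. Let B = diag(β) with β_j = −c_j α T_j where c_j ∈ [0, 1/2). Then f_α(x + Bx) − f_α(x) ≤ −α Σ_j c_j(1 − 2c_j) ∇_j f_α(x) T_j x_j. -/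
open Real Finset

lemma exp_half_lt_two : Real.exp (1/2) < 2 := by
  have h : Real.exp (1/2) * Real.exp (1/2) = Real.exp 1 := by
    rw [← Real.exp_add]; norm_num
  nlinarith [Real.exp_pos (1/2:ℝ), Real.exp_one_lt_d9]

lemma rpow_base_le_two (α v : ℝ) (hα : 0 < α) (hα1 : α < 1)
    (hv0 : 0 ≤ v) (hv : v ≤ 1 + α/2) : v ^ ((1-α)/α) ≤ 2 := by
  have hq : 0 ≤ (1-α)/α := by
    apply div_nonneg (by linarith) hα.le
  calc v ^ ((1-α)/α) ≤ (1+α/2) ^ ((1-α)/α) := Real.rpow_le_rpow hv0 hv hq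
    _ ≤ (Real.exp (α/2)) ^ ((1-α)/α) := by
        apply Real.rpow_le_rpow (by positivity) _ hq
        linarith [Real.add_one_le_exp (α/2)]
    _ = Real.exp (α/2 * ((1-α)/α)) := (Real.exp_mul _ _).symm
    _ ≤ Real.exp (1/2) := by
        apply Real.exp_le_exp.mpr
        have : α/2 * ((1-α)/α) = (1-α)/2 := by field_simp
        rw [this]; linarith
    _ ≤ 2 := exp_half_lt_two.le

lemma key_ineq (α u : ℝ) (hα : 0 < α) (hα1 : α < 1) (hu : |u| ≤ α/2) :
    (α/(1+α)) * (1+u) ^ ((1+α)/α) ≤ α/(1+α) + u + u^2/α := by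
  obtain ⟨hul, hur⟩ := abs_le.mp hu
  set φ : ℝ → ℝ := fun z => α/(1+α) + z + z^2/α - (α/(1+α)) * (1+z) ^ ((1+α)/α) with hφdef
  set ψ : ℝ → ℝ := fun z => 1 + 2*z/α - (1+z) ^ (1/α) with hψdef
  have hα' : (0:ℝ) < 1 + α := by linarith
  have hpos : ∀ z : ℝ, -(α/2) ≤ z → (0:ℝ) < 1 + z := fun z hz => by linarith
  have hφ : ∀ z : ℝ, -(α/2) ≤ z → HasDerivAt φ (ψ z) z := by
    intro z hz
    have h1 : HasDerivAt (fun z : ℝ => 1 + z) 1 z := (hasDerivAt_id z).const_add 1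
    have h2 := h1.rpow_const (p := (1+α)/α) (Or.inl (hpos z hz).ne')
    have h3 : HasDerivAt (fun z : ℝ => z^2/α) (2*z/α) z := by
      have := (hasDerivAt_pow 2 z).div_const α
      simpa using this
    have h4 := (((hasDerivAt_const z (α/(1+α))).add (hasDerivAt_id z)).add h3).sub
      (h2.const_mul (α/(1+α)))
    refine h4.congr_deriv ?_
    have he : (1+α)/α - 1 = 1/α := by field_simp; ring
    rw [he]
    simp only [hψdef]
    field_simp
    ring
  have hψ : ∀ z : ℝ, -(α/2) ≤ z → HasDerivAt ψ (2/α - (1/α)*(1+z)^(1/α-1)) z := by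
    intro z hz
    have h1 : HasDerivAt (fun z : ℝ => 1 + z) 1 z := (hasDerivAt_id z).const_add 1
    have h2 := h1.rpow_const (p := 1/α) (Or.inl (hpos z hz).ne')
    have h3 : HasDerivAt (fun z : ℝ => 1 + 2*z/α) (2/α) z := by
      have : HasDerivAt (fun z : ℝ => 2*z/α) (2/α) z := by
        have := ((hasDerivAt_id z).const_mul 2).div_const α
        simpa using this
      simpa using this.const_add 1
    have h4 := h3.sub h2
    refine h4.congr_deriv ?_
    ring
  have hψ0 : ψ 0 = 0 := by simp [hψdef]
  have hψnonneg : ∀ z ∈ Set.Icc (0:ℝ) (α/2), 0 ≤ ψ z := by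
    have hmono : MonotoneOn ψ (Set.Icc (-(α/2)) (α/2)) := by
      apply monotoneOn_of_deriv_nonneg (convex_Icc _ _)
      · intro z hz
        exact (hψ z hz.1).continuousAt.continuousWithinAt
      · intro z hz
        rw [interior_Icc] at hz
        exact (hψ z hz.1.le).differentiableAt.differentiableWithinAt
      · intro z hz
        rw [interior_Icc] at hz
        rw [(hψ z hz.1.le).deriv]
        have hb : (1+z) ^ ((1-α)/α) ≤ 2 :=
          rpow_base_le_two α (1+z) hα hα1 (hpos z hz.1.le).le (by linarith [hz.2])
        have he : 1/α - 1 = (1-α)/α := by field_simp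
        rw [he]
        have : (1/α) * (1+z)^((1-α)/α) ≤ (1/α) * 2 := by
          apply mul_le_mul_of_nonneg_left hb (by positivity)
        have h2 : (1:ℝ)/α * 2 = 2/α := by ring
        linarith [this.trans_eq h2]
    intro z hz
    have h0mem : (0:ℝ) ∈ Set.Icc (-(α/2)) (α/2) := by constructor <;> [linarith; linarith]
    have hzmem : z ∈ Set.Icc (-(α/2)) (α/2) := ⟨by linarith [hz.1], hz.2⟩
    have := hmono h0mem hzmem hz.1
    rw [hψ0] at this
    exact this
  have hψnonpos : ∀ z ∈ Set.Icc (-(α/2)) (0:ℝ), ψ z ≤ 0 := by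
    have hmono : MonotoneOn ψ (Set.Icc (-(α/2)) (α/2)) := by
      apply monotoneOn_of_deriv_nonneg (convex_Icc _ _)
      · intro z hz
        exact (hψ z hz.1).continuousAt.continuousWithinAt
      · intro z hz
        rw [interior_Icc] at hz
        exact (hψ z hz.1.le).differentiableAt.differentiableWithinAt
      · intro z hz
        rw [interior_Icc] at hz
        rw [(hψ z hz.1.le).deriv]
        have hb : (1+z) ^ ((1-α)/α) ≤ 2 :=
          rpow_base_le_two α (1+z) hα hα1 (hpos z hz.1.le).le (by linarith [hz.2])
        have he : 1/α - 1 = (1-α)/α := by field_simp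
        rw [he]
        have : (1/α) * (1+z)^((1-α)/α) ≤ (1/α) * 2 := by
          apply mul_le_mul_of_nonneg_left hb (by positivity)
        have h2 : (1:ℝ)/α * 2 = 2/α := by ring
        linarith [this.trans_eq h2]
    intro z hz
    have h0mem : (0:ℝ) ∈ Set.Icc (-(α/2)) (α/2) := by constructor <;> [linarith; linarith]
    have hzmem : z ∈ Set.Icc (-(α/2)) (α/2) := ⟨hz.1, by linarith [hz.2]⟩
    have := hmono hzmem h0mem hz.2
    rw [hψ0] at this
    exact this
  have hφ0 : φ 0 = 0 := by simp [hφdef]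
  have hφu : 0 ≤ φ u := by
    rcases le_or_gt 0 u with h | h
    · have hmono : MonotoneOn φ (Set.Icc (0:ℝ) (α/2)) := by
        apply monotoneOn_of_deriv_nonneg (convex_Icc _ _)
        · intro z hz
          exact (hφ z (by linarith [hz.1])).continuousAt.continuousWithinAt
        · intro z hz
          rw [interior_Icc] at hz
          exact (hφ z (by linarith [hz.1])).differentiableAt.differentiableWithinAt
        · intro z hz
          rw [interior_Icc] at hz
          rw [(hφ z (by linarith [hz.1])).deriv]
          exact hψnonneg z ⟨hz.1.le, hz.2.le⟩
      have := hmono (Set.left_mem_Icc.mpr (by linarith)) ⟨h, hur⟩ h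
      rw [hφ0] at this; exact this
    · have hmono : AntitoneOn φ (Set.Icc (-(α/2)) (0:ℝ)) := by
        apply antitoneOn_of_deriv_nonpos (convex_Icc _ _)
        · intro z hz
          exact (hφ z hz.1).continuousAt.continuousWithinAt
        · intro z hz
          rw [interior_Icc] at hz
          exact (hφ z hz.1.le).differentiableAt.differentiableWithinAt
        · intro z hz
          rw [interior_Icc] at hz
          rw [(hφ z hz.1.le).deriv]
          exact hψnonpos z ⟨hz.1.le, hz.2.le⟩
      have := hmono ⟨hul, h.le⟩ (Set.right_mem_Icc.mpr (by linarith)) h.le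
      rw [hφ0] at this; exact this
  simp only [hφdef] at hφu
  linarith

lemma scalar_lemma (α s δ : ℝ) (hα : 0 < α) (hα1 : α < 1) (hs : 0 < s)
    (hδ : |δ| ≤ α/2 * s) :
    (α/(1+α)) * (s+δ) ^ ((1+α)/α) ≤
      (α/(1+α)) * s ^ ((1+α)/α) + s ^ (1/α) * δ + (1/α) * s ^ ((1-α)/α) * δ^2 := by
  have hu : |δ/s| ≤ α/2 := by
    rw [abs_div, abs_of_pos hs, div_le_iff₀ hs]
    linarith
  have hK := key_ineq α (δ/s) hα hα1 hu
  have hsp : (0:ℝ) < s ^ ((1+α)/α) := Real.rpow_pos_of_pos hs _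
  have h1 : s + δ = s * (1 + δ/s) := by field_simp
  have hbase : (0:ℝ) ≤ 1 + δ/s := by
    have := abs_le.mp hu
    linarith [this.1]
  have h2 : (s+δ) ^ ((1+α)/α) = s ^ ((1+α)/α) * (1 + δ/s) ^ ((1+α)/α) := by
    rw [h1, Real.mul_rpow hs.le hbase]
  have e1 : s ^ ((1+α)/α) = s ^ (1/α) * s := by
    rw [show (1+α)/α = 1/α + 1 by field_simp, Real.rpow_add_one hs.ne']
  have e2 : s ^ (1/α) = s ^ ((1-α)/α) * s := by
    rw [show (1:ℝ)/α = (1-α)/α + 1 by field_simp; ring, Real.rpow_add_one hs.ne']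
  have hmul := mul_le_mul_of_nonneg_left hK hsp.le
  calc (α/(1+α)) * (s+δ) ^ ((1+α)/α)
      = s ^ ((1+α)/α) * ((α/(1+α)) * (1+δ/s) ^ ((1+α)/α)) := by rw [h2]; ring
    _ ≤ s ^ ((1+α)/α) * (α/(1+α) + δ/s + (δ/s)^2/α) := hmul
    _ = (α/(1+α)) * s ^ ((1+α)/α) + s ^ (1/α) * δ + (1/α) * s ^ ((1-α)/α) * δ^2 := by
        rw [e1, e2]
        field_simp

/-- Local multiplicative smoothness, Lemma 1:
`f_α(x + Bx) − f_α(x) ≤ −α Σ_j c_j(1 − 2c_j) ∇_j f_α(x) T_j x_j`. -/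
theorem local_multiplicative_smoothness (m n : ℕ) (α : ℝ)
    (hα : 0 < α) (hα1 : α < 1)
    (A : Matrix (Fin m) (Fin n) ℝ) (hA : ∀ i j, 0 ≤ A i j)
    (x : Fin n → ℝ) (hx : ∀ j, 0 ≤ x j) (hAx : ∀ i, 0 < A.mulVec x i)
    (f : (Fin n → ℝ) → ℝ)
    (hf : ∀ y : Fin n → ℝ, f y =
      -(∑ j, y j) + (α / (1 + α)) * ∑ i, (A.mulVec y i) ^ ((1 + α) / α))
    (g : Fin n → ℝ)
    (hg : ∀ j, g j = -1 + ∑ i, A i j * (A.mulVec x i) ^ (1 / α))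
    (T : Fin n → ℝ)
    (hT : ∀ j, (g j ≤ 1 → T j = g j) ∧ (1 < g j → T j = 1))
    (c : Fin n → ℝ) (hc : ∀ j, 0 ≤ c j ∧ c j < 1 / 2)
    (β : Fin n → ℝ) (hβ : ∀ j, β j = -(c j) * α * T j) :
    f (fun j => x j + β j * x j) - f x ≤
      -α * ∑ j, c j * (1 - 2 * c j) * g j * T j * x j := by
  classical
  set s : Fin m → ℝ := fun i => A.mulVec x i with hs
  set v : Fin n → ℝ := fun j => β j * x j with hv
  set d : Fin m → ℝ := fun i => ∑ j, A i j * v j with hd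
  -- bounds on T
  have hT1 : ∀ j, |T j| ≤ 1 := by
    intro j
    have hg1 : -1 ≤ g j := by
      rw [hg j]
      have h0 : 0 ≤ ∑ i, A i j * (A.mulVec x i) ^ (1/α) :=
        Finset.sum_nonneg fun i _ => mul_nonneg (hA i j) (Real.rpow_nonneg (hAx i).le _)
      linarith
    rcases le_or_gt (g j) 1 with h | h
    · rw [(hT j).1 h, abs_le]; exact ⟨hg1, h⟩
    · rw [(hT j).2 h]; norm_num
  have hβb : ∀ j, |β j| ≤ α/2 := by
    intro j
    rw [hβ j]
    have h1 : |(-(c j) * α * T j)| = c j * α * |T j| := by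
      rw [abs_mul, abs_mul, abs_neg, abs_of_nonneg (hc j).1, abs_of_pos hα]
    rw [h1]
    have h2 : c j * α * |T j| ≤ c j * α * 1 :=
      mul_le_mul_of_nonneg_left (hT1 j) (mul_nonneg (hc j).1 hα.le)
    have h3 : c j * α ≤ 1/2 * α := mul_le_mul_of_nonneg_right (hc j).2.le hα.le
    linarith
  -- column sums
  have hcol : ∀ j, ∑ i, A i j * s i ^ (1/α) = g j + 1 := by
    intro j
    rw [hg j]
    ring
  have hsi : ∀ i, s i = ∑ j, A i j * x j := by
    intro i
    simp [hs, Matrix.mulVec, dotProduct]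
  -- d bound
  have hdb : ∀ i, |d i| ≤ α/2 * s i := by
    intro i
    calc |d i| ≤ ∑ j, |A i j * v j| := Finset.abs_sum_le_sum_abs _ _
      _ ≤ ∑ j, A i j * (α/2 * x j) := by
          apply Finset.sum_le_sum
          intro j _
          rw [abs_mul, abs_of_nonneg (hA i j), hv]
          simp only
          rw [abs_mul, abs_of_nonneg (hx j)]
          exact mul_le_mul_of_nonneg_left
            (mul_le_mul_of_nonneg_right (hβb j) (hx j)) (hA i j)
      _ = α/2 * s i := by
          rw [hsi i, Finset.mul_sum]
          apply Finset.sum_congr rfl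
          intro j _
          ring
  -- Cauchy-Schwarz
  have hCS : ∀ i, d i ^ 2 ≤ s i * ∑ j, A i j * x j * β j ^ 2 := by
    intro i
    have key := Finset.sum_mul_sq_le_sq_mul_sq Finset.univ
      (fun j => Real.sqrt (A i j * x j)) (fun j => Real.sqrt (A i j * x j) * β j)
    have e1 : ∀ j : Fin n, Real.sqrt (A i j * x j) * (Real.sqrt (A i j * x j) * β j)
        = A i j * v j := by
      intro j
      rw [hv]
      simp only
      rw [← mul_assoc, Real.mul_self_sqrt (mul_nonneg (hA i j) (hx j))]
      ring
    have e2 : ∀ j : Fin n, Real.sqrt (A i j * x j) ^ 2 = A i j * x j := by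
      intro j; exact Real.sq_sqrt (mul_nonneg (hA i j) (hx j))
    have e3 : ∀ j : Fin n, (Real.sqrt (A i j * x j) * β j) ^ 2 = A i j * x j * β j ^ 2 := by
      intro j; rw [mul_pow, e2 j]
    rw [Finset.sum_congr rfl (fun j _ => e1 j)] at key
    rw [Finset.sum_congr rfl (fun j _ => e2 j)] at key
    rw [Finset.sum_congr rfl (fun j _ => e3 j)] at key
    rw [← hsi i] at key
    exact key
  -- mulVec of x + v
  have hAy : ∀ i, A.mulVec (fun j => x j + β j * x j) i = s i + d i := by
    intro i
    calc A.mulVec (fun j => x j + β j * x j) i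
        = ∑ j, A i j * (x j + β j * x j) := by
          simp [Matrix.mulVec, dotProduct]
      _ = (∑ j, A i j * x j) + ∑ j, A i j * v j := by
          rw [← Finset.sum_add_distrib]
          apply Finset.sum_congr rfl
          intro j _
          simp only [hv]
          ring
      _ = s i + d i := by rw [hsi i, hd]
  -- sum swap identities
  have swap1 : ∑ i, s i ^ (1/α) * d i = ∑ j, (g j + 1) * v j := by
    simp only [hd, Finset.mul_sum]
    rw [Finset.sum_comm]
    apply Finset.sum_congr rfl
    intro j _
    rw [← hcol j, Finset.sum_mul]
    apply Finset.sum_congr rfl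
    intro i _
    ring
  have swap2 : ∑ i, s i ^ (1/α) * ∑ j, A i j * x j * β j ^ 2
      = ∑ j, (g j + 1) * (x j * β j ^ 2) := by
    simp only [Finset.mul_sum]
    rw [Finset.sum_comm]
    apply Finset.sum_congr rfl
    intro j _
    rw [← hcol j, Finset.sum_mul]
    apply Finset.sum_congr rfl
    intro i _
    ring
  -- rpow identity
  have erpow : ∀ i, s i ^ ((1-α)/α) * s i = s i ^ (1/α) := by
    intro i
    rw [← Real.rpow_add_one (hAx i).ne' ((1-α)/α)]
    congr 1
    field_simp; ring
  -- step 1 : the per-i scalar bound summed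
  have step1 : (α/(1+α)) * ∑ i, (s i + d i) ^ ((1+α)/α)
      ≤ (α/(1+α)) * ∑ i, s i ^ ((1+α)/α)
        + ∑ i, (s i ^ (1/α) * d i + (1/α) * (s i ^ ((1-α)/α) * d i ^ 2)) := by
    rw [Finset.mul_sum, Finset.mul_sum, ← Finset.sum_add_distrib]
    apply Finset.sum_le_sum
    intro i _
    have hsl := scalar_lemma α (s i) (d i) hα hα1 (hAx i) (by
      have := hdb i; linarith [abs_le.mp this])
    linarith [hsl]
  -- step 2 : quadratic bound
  have step2 : ∑ i, (1/α) * (s i ^ ((1-α)/α) * d i ^ 2)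
      ≤ (1/α) * ∑ j, (g j + 1) * (x j * β j ^ 2) := by
    rw [← swap2, Finset.mul_sum]
    apply Finset.sum_le_sum
    intro i _
    have h1 : s i ^ ((1-α)/α) * d i ^ 2 ≤ s i ^ ((1-α)/α) * (s i * ∑ j, A i j * x j * β j ^ 2) :=
      mul_le_mul_of_nonneg_left (hCS i) (Real.rpow_nonneg (hAx i).le _)
    have h2 : s i ^ ((1-α)/α) * (s i * ∑ j, A i j * x j * β j ^ 2)
        = s i ^ (1/α) * ∑ j, A i j * x j * β j ^ 2 := by
      rw [← erpow i]; ring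
    rw [h2] at h1
    have hαinv : (0:ℝ) ≤ 1/α := by positivity
    exact mul_le_mul_of_nonneg_left h1 hαinv
  -- assemble f difference
  have hfy := hf (fun j => x j + β j * x j)
  have hfx := hf x
  have hsum1 : ∑ j, (x j + β j * x j) = ∑ j, x j + ∑ j, v j := by
    rw [← Finset.sum_add_distrib]
  have hfdiff : f (fun j => x j + β j * x j) - f x
      = -∑ j, v j + ((α/(1+α)) * ∑ i, (s i + d i) ^ ((1+α)/α)
        - (α/(1+α)) * ∑ i, s i ^ ((1+α)/α)) := by
    rw [hfy, hfx, hsum1]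
    have : ∀ i, A.mulVec (fun j => x j + β j * x j) i ^ ((1+α)/α) = (s i + d i) ^ ((1+α)/α) := by
      intro i; rw [hAy i]
    rw [Finset.sum_congr rfl (fun i _ => this i)]
    simp only [hs]
    ring
  -- combine
  have hcomb : f (fun j => x j + β j * x j) - f x
      ≤ ∑ j, (g j * v j + (1/α) * ((g j + 1) * (x j * β j ^ 2))) := by
    rw [hfdiff]
    have h1 : ∑ i, (s i ^ (1/α) * d i + (1/α) * (s i ^ ((1-α)/α) * d i ^ 2))
        = ∑ j, (g j + 1) * v j + ∑ i, (1/α) * (s i ^ ((1-α)/α) * d i ^ 2) := by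
      rw [Finset.sum_add_distrib, swap1]
    have h2 : -∑ j, v j + ((α/(1+α)) * ∑ i, (s i + d i) ^ ((1+α)/α)
        - (α/(1+α)) * ∑ i, s i ^ ((1+α)/α))
        ≤ -∑ j, v j + (∑ j, (g j + 1) * v j + (1/α) * ∑ j, (g j + 1) * (x j * β j ^ 2)) := by
      have := step1
      have := step2
      rw [h1] at *
      linarith
    refine h2.trans (le_of_eq ?_)
    calc -∑ j, v j + (∑ j, (g j + 1) * v j + (1/α) * ∑ j, (g j + 1) * (x j * β j ^ 2))
        = -∑ j, v j + ∑ j, ((g j + 1) * v j + (1/α) * ((g j + 1) * (x j * β j ^ 2))) := by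
          rw [Finset.mul_sum, ← Finset.sum_add_distrib]
      _ = ∑ j, (-(v j) + ((g j + 1) * v j + (1/α) * ((g j + 1) * (x j * β j ^ 2)))) := by
          rw [← Finset.sum_neg_distrib, ← Finset.sum_add_distrib]
      _ = ∑ j, (g j * v j + (1/α) * ((g j + 1) * (x j * β j ^ 2))) :=
          Finset.sum_congr rfl (fun j _ => by ring)
  -- final per-coordinate inequality
  refine hcomb.trans ?_
  rw [Finset.mul_sum]
  apply Finset.sum_le_sum
  intro j _
  have hαne : α ≠ 0 := hα.ne'
  have hexp : g j * v j + (1/α) * ((g j + 1) * (x j * β j ^ 2))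
      = -α * (c j * g j * T j * x j) + α * (c j^2 * T j^2 * (g j + 1) * x j) := by
    rw [hv]
    simp only
    rw [hβ j]
    field_simp
  rw [hexp]
  have hcj := (hc j).1
  have hxj := hx j
  rcases le_or_gt (g j) 1 with h | h
  · rw [(hT j).1 h]
    have key : α * (c j^2 * (g j)^2 * x j * (1 - g j)) ≥ 0 := by
      apply mul_nonneg hα.le
      apply mul_nonneg
      apply mul_nonneg (mul_nonneg (sq_nonneg _) (sq_nonneg _)) hxj
      linarith
    nlinarith [key]
  · rw [(hT j).2 h]
    have key : α * (c j^2 * x j * (g j - 1)) ≥ 0 := by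
      apply mul_nonneg hα.le
      apply mul_nonneg (mul_nonneg (sq_nonneg _) hxj)
      linarith
    nlinarith [key]
end
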